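/- Let A be a real symmetric 3×3 matrix with trace zero (a deviatoric stress), and let {a, b, c} be any orthonormal basis of ℝ³. Then 0 ≤ ⟨a, Aa⟩² + ⟨b, Ab⟩² + ⟨c, Ac⟩² ≤ tr(A²). Moreover the upper bound is attained when a, b, c are eigenvectors of A, and the lower bound is attained when {a,b,c} is a pure shear basis for A (i.e. ⟨a,Aa⟩ = ⟨b,Ab⟩ = ⟨c,Ac⟩ = 0), and such a basis exists since tr A = 0. -/

import Mathlib

open Matrix

/-- Three pairwise orthogonal unit vectors in ℝ³ (an orthonormal basis). -/
def ONB3 (a b c : Fin 3 → ℝ) : Prop :=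
  a ⬝ᵥ a = 1 ∧ b ⬝ᵥ b = 1 ∧ c ⬝ᵥ c = 1 ∧ a ⬝ᵥ b = 0 ∧ a ⬝ᵥ c = 0 ∧ b ⬝ᵥ c = 0

lemma PPt (a b c : Fin 3 → ℝ) (h : ONB3 a b c) :
    (Matrix.of ![a, b, c]) * (Matrix.of ![a, b, c])ᵀ = 1 := by
  obtain ⟨h1, h2, h3, h4, h5, h6⟩ := h
  simp only [dotProduct, Fin.sum_univ_three] at h1 h2 h3 h4 h5 h6
  ext i j
  simp only [Matrix.mul_apply, Matrix.transpose_apply, Matrix.of_apply]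
  fin_cases i <;> fin_cases j <;>
    simp [Fin.sum_univ_three, Matrix.one_apply] <;>
    linarith [h1, h2, h3, h4, h5, h6]

lemma Mentry (B : Matrix (Fin 3) (Fin 3) ℝ) (a b c : Fin 3 → ℝ) (i j : Fin 3) :
    ((Matrix.of ![a, b, c]) * B * (Matrix.of ![a, b, c])ᵀ) i j
      = (![a,b,c] i) ⬝ᵥ B.mulVec (![a,b,c] j) := by
  simp only [Matrix.mul_apply, Matrix.transpose_apply, Matrix.of_apply, dotProduct,
    Matrix.mulVec, Fin.sum_univ_three]
  ring

lemma trace_conj (B : Matrix (Fin 3) (Fin 3) ℝ) (a b c : Fin 3 → ℝ) (h : ONB3 a b c) :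
    B.trace = ((Matrix.of ![a, b, c]) * B * (Matrix.of ![a, b, c])ᵀ).trace := by
  have h1 := PPt a b c h
  have h2 : (Matrix.of ![a, b, c])ᵀ * (Matrix.of ![a, b, c]) = 1 :=
    mul_eq_one_comm.mp h1
  calc B.trace = (B * ((Matrix.of ![a, b, c])ᵀ * (Matrix.of ![a, b, c]))).trace := by
        rw [h2, Matrix.mul_one]
    _ = ((Matrix.of ![a, b, c]) * B * (Matrix.of ![a, b, c])ᵀ).trace := by
        rw [← Matrix.mul_assoc, Matrix.trace_mul_comm, Matrix.mul_assoc]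

lemma symdot (A : Matrix (Fin 3) (Fin 3) ℝ) (hA : A.IsSymm) (x y : Fin 3 → ℝ) :
    x ⬝ᵥ A.mulVec y = y ⬝ᵥ A.mulVec x := by
  rw [dotProduct_mulVec, ← mulVec_transpose, hA.eq, dotProduct_comm]

lemma traceN (N : Matrix (Fin 3) (Fin 3) ℝ) : N.trace = N 0 0 + N 1 1 + N 2 2 := by
  simp [Matrix.trace, Matrix.diag, Fin.sum_univ_three]

lemma traceNsq (N : Matrix (Fin 3) (Fin 3) ℝ) :
    (N * N).trace = N 0 0 * N 0 0 + N 0 1 * N 1 0 + N 0 2 * N 2 0 + N 1 0 * N 0 1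
      + N 1 1 * N 1 1 + N 1 2 * N 2 1 + N 2 0 * N 0 2 + N 2 1 * N 1 2 + N 2 2 * N 2 2 := by
  simp only [Matrix.trace, Matrix.diag, Matrix.mul_apply, Fin.sum_univ_three]
  ring

lemma key (A : Matrix (Fin 3) (Fin 3) ℝ) (hA : A.IsSymm) (a b c : Fin 3 → ℝ)
    (h : ONB3 a b c) :
    (A * A).trace = (a ⬝ᵥ A.mulVec a)^2 + (b ⬝ᵥ A.mulVec b)^2 + (c ⬝ᵥ A.mulVec c)^2
      + 2*((a ⬝ᵥ A.mulVec b)^2 + (a ⬝ᵥ A.mulVec c)^2 + (b ⬝ᵥ A.mulVec c)^2) := by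
  set P := Matrix.of ![a, b, c] with hPdef
  have h2 : Pᵀ * P = 1 := mul_eq_one_comm.mp (PPt a b c h)
  have hMM : (P * A * Pᵀ) * (P * A * Pᵀ) = P * (A * A) * Pᵀ := by
    simp only [Matrix.mul_assoc]
    rw [← Matrix.mul_assoc Pᵀ P, h2, Matrix.one_mul]
  have hM : (A * A).trace = ((P * A * Pᵀ) * (P * A * Pᵀ)).trace := by
    rw [hMM, ← trace_conj (A * A) a b c h]
  rw [hM, traceNsq]
  simp only [hPdef, Mentry]
  simp only [Matrix.cons_val_zero, Matrix.cons_val_one, Matrix.head_cons,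
    Matrix.cons_val_two, Matrix.tail_cons]
  rw [symdot A hA b a, symdot A hA c a, symdot A hA c b]
  ring

lemma comb_dot (u : Fin 3 → Fin 3 → ℝ) (hu : ∀ i j, u i ⬝ᵥ u j = if i = j then 1 else 0)
    (x0 x1 x2 y0 y1 y2 : ℝ) :
    (x0 • u 0 + x1 • u 1 + x2 • u 2) ⬝ᵥ (y0 • u 0 + y1 • u 1 + y2 • u 2) =
      x0*y0 + x1*y1 + x2*y2 := by
  simp [add_dotProduct, dotProduct_add, smul_dotProduct, dotProduct_smul, hu]
  ring

lemma comb_dotA (A : Matrix (Fin 3) (Fin 3) ℝ) (u : Fin 3 → Fin 3 → ℝ) (μ : Fin 3 → ℝ)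
    (hu : ∀ i j, u i ⬝ᵥ u j = if i = j then 1 else 0)
    (hAu : ∀ i, A.mulVec (u i) = μ i • u i)
    (x0 x1 x2 y0 y1 y2 : ℝ) :
    (x0 • u 0 + x1 • u 1 + x2 • u 2) ⬝ᵥ A.mulVec (y0 • u 0 + y1 • u 1 + y2 • u 2) =
      μ 0 * (x0*y0) + μ 1 * (x1*y1) + μ 2 * (x2*y2) := by
  rw [Matrix.mulVec_add, Matrix.mulVec_add, Matrix.mulVec_smul, Matrix.mulVec_smul,
    Matrix.mulVec_smul, hAu 0, hAu 1, hAu 2, smul_smul, smul_smul, smul_smul]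
  rw [comb_dot u hu]
  ring

lemma shear_exists (A : Matrix (Fin 3) (Fin 3) ℝ) (hA : A.IsSymm) (htr : A.trace = 0) :
    ∃ a b c : Fin 3 → ℝ, ONB3 a b c ∧
      a ⬝ᵥ A.mulVec a = 0 ∧ b ⬝ᵥ A.mulVec b = 0 ∧ c ⬝ᵥ A.mulVec c = 0 := by
  have hH : A.IsHermitian := by
    unfold Matrix.IsHermitian
    exact isHermitian_iff_isSymm.mpr hA
  set u : Fin 3 → Fin 3 → ℝ := fun i => ⇑(hH.eigenvectorBasis i) with hudef
  set μ : Fin 3 → ℝ := hH.eigenvalues with hμdef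
  have hu : ∀ i j, u i ⬝ᵥ u j = if i = j then 1 else 0 := by
    intro i j
    have h := hH.eigenvectorBasis.orthonormal
    rw [orthonormal_iff_ite] at h
    simpa [hudef, PiLp.inner_apply, dotProduct, mul_comm] using h i j
  have hAu : ∀ i, A.mulVec (u i) = μ i • u i := fun i => hH.mulVec_eigenvectorBasis i
  have hONBu : ONB3 (u 0) (u 1) (u 2) :=
    ⟨by simpa using hu 0 0, by simpa using hu 1 1, by simpa using hu 2 2,
     by simpa using hu 0 1, by simpa using hu 0 2, by simpa using hu 1 2⟩
  have e0 : u 0 ⬝ᵥ A.mulVec (u 0) = μ 0 := by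
    rw [hAu 0, dotProduct_smul, hu 0 0]; simp
  have e1 : u 1 ⬝ᵥ A.mulVec (u 1) = μ 1 := by
    rw [hAu 1, dotProduct_smul, hu 1 1]; simp
  have e2 : u 2 ⬝ᵥ A.mulVec (u 2) = μ 2 := by
    rw [hAu 2, dotProduct_smul, hu 2 2]; simp
  have ht2 : A.trace = u 0 ⬝ᵥ A.mulVec (u 0) + u 1 ⬝ᵥ A.mulVec (u 1)
      + u 2 ⬝ᵥ A.mulVec (u 2) := by
    rw [trace_conj A (u 0) (u 1) (u 2) hONBu, traceN]
    simp only [Mentry]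
    simp only [Matrix.cons_val_zero, Matrix.cons_val_one, Matrix.head_cons,
      Matrix.cons_val_two, Matrix.tail_cons]
  have hsum : μ 0 + μ 1 + μ 2 = 0 := by
    rw [e0, e1, e2] at ht2; linarith [htr, ht2]
  -- constants
  set p : ℝ := Real.sqrt (1/2) with hpdef
  set q : ℝ := Real.sqrt (1/6) with hqdef
  set r : ℝ := Real.sqrt (1/3) with hrdef
  have hp2 : p * p = 1/2 := Real.mul_self_sqrt (by norm_num)
  have hq2 : q * q = 1/6 := Real.mul_self_sqrt (by norm_num)
  have hr2 : r * r = 1/3 := Real.mul_self_sqrt (by norm_num)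
  -- choose the rotation angle by the intermediate value theorem
  set g : ℝ → ℝ := fun t =>
    μ 0 * (Real.cos t * p + Real.sin t * q)^2
      + μ 1 * (-Real.cos t * p + Real.sin t * q)^2
      + μ 2 * (-2 * Real.sin t * q)^2 with hgdef
  have hgc : Continuous g := by
    apply Continuous.add
    apply Continuous.add
    · exact (continuous_const.mul (((Real.continuous_cos.mul continuous_const).add
        (Real.continuous_sin.mul continuous_const)).pow 2))
    · exact (continuous_const.mul ((((Real.continuous_cos.neg.mul continuous_const)).add
        (Real.continuous_sin.mul continuous_const)).pow 2))
    · exact (continuous_const.mul (((continuous_const.mul Real.continuous_sin).mul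
        continuous_const).pow 2))
  have hg0 : g 0 = -(μ 2)/2 := by
    simp only [hgdef, Real.cos_zero, Real.sin_zero]
    linear_combination (μ 0 + μ 1) * hp2 + (1/2) * hsum
  have hgq : g (Real.pi/2) = μ 2 / 2 := by
    simp only [hgdef, Real.cos_pi_div_two, Real.sin_pi_div_two]
    linear_combination (μ 0 + μ 1 + 4 * μ 2) * hq2 + (1/6) * hsum
  have hmem : (0:ℝ) ∈ Set.uIcc (g 0) (g (Real.pi/2)) := by
    rw [hg0, hgq, Set.mem_uIcc]
    rcases le_total (μ 2) 0 with h | h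
    · right; constructor <;> linarith
    · left; constructor <;> linarith
  obtain ⟨t, -, hgt⟩ := intermediate_value_uIcc (hgc.continuousOn) hmem
  set C := Real.cos t with hC
  set S := Real.sin t with hS
  have hpy : C * C + S * S = 1 := by
    have := Real.sin_sq_add_cos_sq t; nlinarith [this]
  -- the three vectors
  refine ⟨r • u 0 + r • u 1 + r • u 2,
    (C*p + S*q) • u 0 + (-C*p + S*q) • u 1 + (-2*S*q) • u 2,
    (-S*p + C*q) • u 0 + (S*p + C*q) • u 1 + (-2*C*q) • u 2,
    ⟨?_, ?_, ?_, ?_, ?_, ?_⟩, ?_, ?_, ?_⟩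
  · rw [comb_dot u hu]; linear_combination 3 * hr2
  · rw [comb_dot u hu]
    linear_combination (2*C^2) * hp2 + (6*S^2) * hq2 + hpy
  · rw [comb_dot u hu]
    linear_combination (2*S^2) * hp2 + (6*C^2) * hq2 + hpy
  · rw [comb_dot u hu]; ring
  · rw [comb_dot u hu]; ring
  · rw [comb_dot u hu]
    linear_combination (-2*S*C) * hp2 + (6*S*C) * hq2
  · rw [comb_dotA A u μ hu hAu]
    linear_combination (μ 0 + μ 1 + μ 2) * hr2 + (1/3) * hsum
  · rw [comb_dotA A u μ hu hAu]
    have hgt' : μ 0 * (C * p + S * q)^2 + μ 1 * (-C * p + S * q)^2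
        + μ 2 * (-2 * S * q)^2 = 0 := hgt
    linear_combination hgt'
  · rw [comb_dotA A u μ hu hAu]
    have hgt' : μ 0 * (C * p + S * q)^2 + μ 1 * (-C * p + S * q)^2
        + μ 2 * (-2 * S * q)^2 = 0 := hgt
    linear_combination (-1) * hgt' + ((μ 0 + μ 1)*(C^2+S^2)) * hp2
      + ((μ 0 + μ 1 + 4*μ 2)*(C^2+S^2)) * hq2 + ((2/3)*(C^2+S^2)) * hsum

/-- for a symmetric traceless 3×3 matrix A and any orthonormal basis {a,b,c},
0 ≤ ⟨a,Aa⟩² + ⟨b,Ab⟩² + ⟨c,Ac⟩² ≤ tr(A²); the upper bound is attained for an eigenbasis,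
the lower bound is attained for a pure shear basis, and a pure shear basis exists. -/
theorem stmt18 (A : Matrix (Fin 3) (Fin 3) ℝ) (hA : A.IsSymm) (htr : A.trace = 0) :
    (∀ a b c : Fin 3 → ℝ, ONB3 a b c →
      0 ≤ (a ⬝ᵥ A.mulVec a)^2 + (b ⬝ᵥ A.mulVec b)^2 + (c ⬝ᵥ A.mulVec c)^2 ∧
      (a ⬝ᵥ A.mulVec a)^2 + (b ⬝ᵥ A.mulVec b)^2 + (c ⬝ᵥ A.mulVec c)^2 ≤ (A * A).trace) ∧
    (∀ a b c : Fin 3 → ℝ, ONB3 a b c →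
      (∃ α : ℝ, A.mulVec a = α • a) → (∃ β : ℝ, A.mulVec b = β • b) →
      (∃ γ : ℝ, A.mulVec c = γ • c) →
      (a ⬝ᵥ A.mulVec a)^2 + (b ⬝ᵥ A.mulVec b)^2 + (c ⬝ᵥ A.mulVec c)^2 = (A * A).trace) ∧
    (∀ a b c : Fin 3 → ℝ, ONB3 a b c →
      a ⬝ᵥ A.mulVec a = 0 → b ⬝ᵥ A.mulVec b = 0 → c ⬝ᵥ A.mulVec c = 0 →
      (a ⬝ᵥ A.mulVec a)^2 + (b ⬝ᵥ A.mulVec b)^2 + (c ⬝ᵥ A.mulVec c)^2 = 0) ∧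
    (∃ a b c : Fin 3 → ℝ, ONB3 a b c ∧
      a ⬝ᵥ A.mulVec a = 0 ∧ b ⬝ᵥ A.mulVec b = 0 ∧ c ⬝ᵥ A.mulVec c = 0) := by
  refine ⟨?_, ?_, ?_, shear_exists A hA htr⟩
  · intro a b c h
    have k := key A hA a b c h
    constructor
    · positivity
    · nlinarith [sq_nonneg (a ⬝ᵥ A.mulVec b), sq_nonneg (a ⬝ᵥ A.mulVec c),
        sq_nonneg (b ⬝ᵥ A.mulVec c)]
  · rintro a b c h ⟨α, hα⟩ ⟨β, hβ⟩ ⟨γ, hγ⟩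
    have k := key A hA a b c h
    have z1 : a ⬝ᵥ A.mulVec b = 0 := by rw [hβ, dotProduct_smul, h.2.2.2.1]; simp
    have z2 : a ⬝ᵥ A.mulVec c = 0 := by rw [hγ, dotProduct_smul, h.2.2.2.2.1]; simp
    have z3 : b ⬝ᵥ A.mulVec c = 0 := by rw [hγ, dotProduct_smul, h.2.2.2.2.2]; simp
    rw [z1, z2, z3] at k
    linarith
  · intro a b c _ h1 h2 h3
    rw [h1, h2, h3]; norm_num
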